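/- arXiv:2002.07296 — 4 statements merged into one kernel-verified Lean document; each statement's English description precedes it below -/
import Mathlib

section
/- Suppose a continuous trajectory x : [0,∞) → ℝ^d satisfies condition (PE2) for a set Ω ⊆ ℝ^d, and suppose in addition that the family of functions {t ↦ g(x(t)) : g ∈ H_Ω, ‖g‖_H = 1} is uniformly equicontinuous on [0,∞). Then x satisfies condition (PE1) for Ω. -/
/-- The closed linear span `H_Ω` of the Riesz representers `k_p`, `p ∈ Ω`. -/
noncomputable def HOmega {d : ℕ} {H : Type} [NormedAddCommGroup H]
    [InnerProductSpace ℝ H]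
    (k : EuclideanSpace ℝ (Fin d) → H) (Ω : Set (EuclideanSpace ℝ (Fin d))) : Set H :=
  closure ((Submodule.span ℝ (k '' Ω) : Submodule ℝ H) : Set H)

/-- Condition (PE1) with explicit constants `T₀, γ, δ, Δ`. -/
def PE1Const {d : ℕ} {H : Type} [NormedAddCommGroup H] [InnerProductSpace ℝ H]
    (ι : H →ₗ[ℝ] (EuclideanSpace ℝ (Fin d) → ℝ)) (k : EuclideanSpace ℝ (Fin d) → H)
    (Ω : Set (EuclideanSpace ℝ (Fin d))) (x : ℝ → EuclideanSpace ℝ (Fin d))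
    (T₀ γ δ Δ : ℝ) : Prop :=
  ∀ t : ℝ, T₀ ≤ t → ∀ g ∈ HOmega k Ω, ‖g‖ = 1 →
    ∃ s ∈ Set.Icc t (t + Δ), γ ≤ |∫ τ in s..(s + δ), ι g (x τ)|

/-- Condition (PE2) with explicit constants `T₀, γ, Δ`. -/
def PE2Const {d : ℕ} {H : Type} [NormedAddCommGroup H] [InnerProductSpace ℝ H]
    (ι : H →ₗ[ℝ] (EuclideanSpace ℝ (Fin d) → ℝ)) (k : EuclideanSpace ℝ (Fin d) → H)
    (Ω : Set (EuclideanSpace ℝ (Fin d))) (x : ℝ → EuclideanSpace ℝ (Fin d))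
    (T₀ γ Δ : ℝ) : Prop :=
  ∀ t : ℝ, T₀ ≤ t → ∀ g ∈ HOmega k Ω, ‖g‖ = 1 →
    γ ≤ ∫ τ in t..(t + Δ), (ι g (x τ)) ^ 2

/-- if a continuous trajectory satisfies (PE2) for `Ω` and the family
`{t ↦ g(x(t)) : g ∈ H_Ω, ‖g‖ = 1}` is uniformly equicontinuous on `[0,∞)`,
then the trajectory satisfies (PE1) for `Ω`. -/
theorem pe2_implies_pe1_of_equicontinuous
    {d : ℕ} {H : Type} [NormedAddCommGroup H] [InnerProductSpace ℝ H] [CompleteSpace H]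
    (ι : H →ₗ[ℝ] (EuclideanSpace ℝ (Fin d) → ℝ))
    (k : EuclideanSpace ℝ (Fin d) → H)
    (hk : ∀ p : EuclideanSpace ℝ (Fin d), ∀ g : H, (inner ℝ (k p) g : ℝ) = ι g p)
    (Ω : Set (EuclideanSpace ℝ (Fin d)))
    (x : ℝ → EuclideanSpace ℝ (Fin d)) (hx : ContinuousOn x (Set.Ici 0))
    (hPE2 : ∃ T₀ γ Δ : ℝ, 0 < T₀ ∧ 0 < γ ∧ 0 < Δ ∧ PE2Const ι k Ω x T₀ γ Δ)
    (hequi : ∀ ε : ℝ, 0 < ε → ∃ η : ℝ, 0 < η ∧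
      ∀ g ∈ HOmega k Ω, ‖g‖ = 1 → ∀ s t : ℝ, 0 ≤ s → 0 ≤ t → |s - t| < η →
        |ι g (x s) - ι g (x t)| < ε) :
    ∃ T₀ γ δ Δ : ℝ, 0 < T₀ ∧ 0 < γ ∧ 0 < δ ∧ 0 < Δ ∧ PE1Const ι k Ω x T₀ γ δ Δ := by
  unfold PE1Const PE2Const at *
  obtain ⟨T₀, γ, Δ, hT₀, hγ, hΔ, hPE⟩ := hPE2
  set m : ℝ := γ / (2 * Δ) with hm
  have hm0 : 0 < m := by positivity
  set c : ℝ := Real.sqrt m with hc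
  have hc0 : 0 < c := Real.sqrt_pos.mpr hm0
  obtain ⟨η, hη0, hη⟩ := hequi (c / 2) (by positivity)
  refine ⟨T₀, (η / 2) * (c / 2), η / 2, Δ, hT₀, by positivity, by positivity, hΔ, ?_⟩
  intro t ht g hg hgnorm
  have ht0 : (0 : ℝ) ≤ t := le_trans hT₀.le ht
  -- continuity of f := fun τ => ι g (x τ) on Ici 0
  have hfc : ContinuousOn (fun τ => ι g (x τ)) (Set.Ici 0) := by
    intro τ hτ
    rw [Metric.continuousWithinAt_iff]
    intro ε hε
    obtain ⟨η', hη'0, hη'⟩ := hequi ε hε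
    refine ⟨η', hη'0, fun s hs hd => ?_⟩
    have := hη' g hg hgnorm s τ hs hτ (by simpa [Real.dist_eq] using hd)
    simpa [Real.dist_eq] using this
  have hint : ∀ a b : ℝ, 0 ≤ a → a ≤ b →
      IntervalIntegrable (fun τ => ι g (x τ)) MeasureTheory.volume a b := by
    intro a b ha hab
    apply ContinuousOn.intervalIntegrable
    apply hfc.mono
    rw [Set.uIcc_of_le hab]
    exact fun τ hτ => le_trans ha hτ.1
  have hint2 : IntervalIntegrable (fun τ => (ι g (x τ)) ^ 2) MeasureTheory.volume t (t + Δ) := by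
    apply ContinuousOn.intervalIntegrable
    apply ContinuousOn.pow
    apply hfc.mono
    rw [Set.uIcc_of_le (by linarith)]
    exact fun τ hτ => le_trans ht0 hτ.1
  -- find τ* with (f τ*)^2 ≥ m
  have hex : ∃ s ∈ Set.Icc t (t + Δ), m ≤ (ι g (x s)) ^ 2 := by
    by_contra hcon
    push_neg at hcon
    have hle : ∫ τ in t..(t + Δ), (ι g (x τ)) ^ 2 ≤ (t + Δ - t) * m := by
      have := intervalIntegral.integral_mono_on (by linarith : t ≤ t + Δ) hint2
        intervalIntegrable_const (fun τ hτ => (hcon τ hτ).le)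
      rwa [intervalIntegral.integral_const, smul_eq_mul] at this
    have hkey := hPE t ht g hg hgnorm
    have hΔm : (t + Δ - t) * m = γ / 2 := by
      field_simp [hm]
      rw [hm]
      field_simp
      ring
    linarith
  obtain ⟨s, hsmem, hs⟩ := hex
  have hs0 : (0 : ℝ) ≤ s := le_trans ht0 hsmem.1
  have habs : c ≤ |ι g (x s)| := by
    have := Real.sqrt_le_sqrt hs
    rwa [Real.sqrt_sq_eq_abs] at this
  refine ⟨s, hsmem, ?_⟩
  have hclose : ∀ τ ∈ Set.Icc s (s + η / 2), |ι g (x τ) - ι g (x s)| < c / 2 := by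
    intro τ hτ
    apply hη g hg hgnorm τ s (le_trans hs0 hτ.1) hs0
    rw [abs_sub_lt_iff]
    constructor <;> [skip; skip] <;> cases hτ <;> linarith
  rcases le_abs.mp habs with hpos | hneg
  · -- f s ≥ c, so f ≥ c/2 on the interval
    have hlow : ∀ τ ∈ Set.Icc s (s + η / 2), c / 2 ≤ ι g (x τ) := by
      intro τ hτ
      have := abs_sub_lt_iff.mp (hclose τ hτ)
      linarith [this.2]
    have hige : (s + η / 2 - s) * (c / 2) ≤ ∫ τ in s..(s + η / 2), ι g (x τ) := by
      have := intervalIntegral.integral_mono_on (by linarith : s ≤ s + η / 2)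
        intervalIntegrable_const (hint s (s + η / 2) hs0 (by linarith)) hlow
      rwa [intervalIntegral.integral_const, smul_eq_mul] at this
    calc (η / 2) * (c / 2) = (s + η / 2 - s) * (c / 2) := by ring
      _ ≤ ∫ τ in s..(s + η / 2), ι g (x τ) := hige
      _ ≤ |∫ τ in s..(s + η / 2), ι g (x τ)| := le_abs_self _
  · -- f s ≤ -c
    have hup : ∀ τ ∈ Set.Icc s (s + η / 2), ι g (x τ) ≤ -(c / 2) := by
      intro τ hτ
      have := abs_sub_lt_iff.mp (hclose τ hτ)
      linarith [this.1]
    have hile : ∫ τ in s..(s + η / 2), ι g (x τ) ≤ (s + η / 2 - s) * (-(c / 2)) := by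
      have := intervalIntegral.integral_mono_on (by linarith : s ≤ s + η / 2)
        (hint s (s + η / 2) hs0 (by linarith)) intervalIntegrable_const hup
      rwa [intervalIntegral.integral_const, smul_eq_mul] at this
    have : (η / 2) * (c / 2) ≤ -∫ τ in s..(s + η / 2), ι g (x τ) := by linarith
    calc (η / 2) * (c / 2) ≤ -∫ τ in s..(s + η / 2), ι g (x τ) := this
      _ ≤ |∫ τ in s..(s + η / 2), ι g (x τ)| := neg_le_abs _
end

section
/- Let T > 0, let x : [0,T] → Ω and u : [0,T] → ℝ be continuous. Let (Hₙ)_{n∈ℕ} be an increasing sequence of finite-dimensional subspaces of H whose union is dense in H, and let Πₙ denote the orthogonal projection of H onto Hₙ. Let (x̂, f̂) : [0,T] → ℝ^d × H be the solution of the estimator equations x̂'(t) = A x̂(t) + B u(t) + (E_{x(t)} f̂(t)) B_N, f̂'(t) = Γ⁻¹ (B_N E_{x(t)})* P (x(t) − x̂(t)) with initial data (x̂₀, f̂₀), and for each n let (x̂ₙ, f̂ₙ) : [0,T] → ℝ^d × Hₙ be the solution of the approximate equations x̂ₙ'(t) = A x̂ₙ(t) + B u(t) + (E_{x(t)} f̂ₙ(t))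 B_N, f̂ₙ'(t) = Πₙ Γ⁻¹ (B_N E_{x(t)})* P (x(t) − x̂ₙ(t)) with x̂ₙ(0) = x̂₀ and f̂ₙ(0) = Πₙ f̂₀. Then sup_{t∈[0,T]} ‖x̂(t) − x̂ₙ(t)‖ → 0 and sup_{t∈[0,T]} ‖f̂(t) − f̂ₙ(t)‖_H → 0 as n → ∞. -/
open Set Filter

set_option maxHeartbeats 2000000

/-- Uniform convergence of the orthogonal projections onto an increasing dense family of
subspaces, on a compact set. -/
lemma proj_unif_aux {H : Type} [NormedAddCommGroup H] [InnerProductSpace ℝ H]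
    [CompleteSpace H] (Hn : ℕ → Submodule ℝ H) [∀ m, FiniteDimensional ℝ (Hn m)]
    (hmono : Monotone Hn) (hdense : Dense (⋃ m, (Hn m : Set H)))
    {K : Set H} (hK : IsCompact K) {ε : ℝ} (hε : 0 < ε) :
    ∃ N : ℕ, ∀ m ≥ N, ∀ y ∈ K, ‖y - ((Hn m).orthogonalProjection y : H)‖ < ε := by
  have key : ∀ (m : ℕ) (y z : H), z ∈ Hn m →
      ‖y - ((Hn m).orthogonalProjection y : H)‖ ≤ ‖y - z‖ := by
    intro m y z hz
    refine le_trans (le_of_eq (Submodule.starProjection_minimal (U := Hn m) y)) ?_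
    exact ciInf_le ⟨0, fun r ⟨w, hw⟩ => hw ▸ norm_nonneg _⟩ (⟨z, hz⟩ : Hn m)
  have ptwise : ∀ y : H, ∃ N : ℕ, ‖y - ((Hn N).orthogonalProjection y : H)‖ < ε / 3 := by
    intro y
    have hy : y ∈ closure (⋃ m, (Hn m : Set H)) := hdense y
    obtain ⟨z, hz, hdz⟩ := Metric.mem_closure_iff.mp hy (ε / 3) (by positivity)
    obtain ⟨N, hzN⟩ := Set.mem_iUnion.mp hz
    exact ⟨N, lt_of_le_of_lt (key N y z hzN) (by rwa [dist_eq_norm] at hdz)⟩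
  choose Nf hNf using ptwise
  have hcover : K ⊆ ⋃ y ∈ K, Metric.ball y (ε / 3) := fun y hy =>
    Set.mem_biUnion hy (Metric.mem_ball_self (by positivity))
  obtain ⟨b, hbK, hbfin, hbcov⟩ :=
    hK.elim_finite_subcover_image (fun y _ => Metric.isOpen_ball) hcover
  refine ⟨hbfin.toFinset.sup Nf, fun m hm y hy => ?_⟩
  obtain ⟨y₀, hy₀b, hyball⟩ := Set.mem_iUnion₂.mp (hbcov hy)
  have hNy₀ : Nf y₀ ≤ m :=
    le_trans (Finset.le_sup (hbfin.mem_toFinset.mpr hy₀b)) hm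
  have hzmem : ((Hn (Nf y₀)).orthogonalProjection y₀ : H) ∈ Hn m :=
    hmono hNy₀ (SetLike.coe_mem _)
  have h1 : ‖y - ((Hn m).orthogonalProjection y : H)‖ ≤
      ‖y - ((Hn (Nf y₀)).orthogonalProjection y₀ : H)‖ := key m y _ hzmem
  have h2 : ‖y - ((Hn (Nf y₀)).orthogonalProjection y₀ : H)‖ ≤
      ‖y - y₀‖ + ‖y₀ - ((Hn (Nf y₀)).orthogonalProjection y₀ : H)‖ := by
    have : y - ((Hn (Nf y₀)).orthogonalProjection y₀ : H) =
        (y - y₀) + (y₀ - ((Hn (Nf y₀)).orthogonalProjection y₀ : H)) := by abel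
    rw [this]; exact norm_add_le _ _
  have h3 : ‖y - y₀‖ < ε / 3 := by
    rw [← dist_eq_norm]; exact Metric.mem_ball.mp hyball
  have h4 := hNf y₀
  calc ‖y - ((Hn m).orthogonalProjection y : H)‖
      ≤ ‖y - y₀‖ + ‖y₀ - ((Hn (Nf y₀)).orthogonalProjection y₀ : H)‖ := le_trans h1 h2
    _ < ε / 3 + ε / 3 := by linarith
    _ ≤ ε := by linarith

/-- the solutions of the finite-dimensional approximate estimator
equations, obtained by projecting the learning law onto an increasing dense family
of finite-dimensional subspaces `Hₙ`, converge uniformly on `[0,T]` to the solution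
of the full estimator equations. -/
theorem finite_dimensional_approximation_converges
    {d : ℕ} (Ω : Set (EuclideanSpace ℝ (Fin d)))
    {H : Type} [NormedAddCommGroup H] [InnerProductSpace ℝ H] [CompleteSpace H]
    (ι : H →ₗ[ℝ] (EuclideanSpace ℝ (Fin d) → ℝ))
    (C : ℝ) (hC : 0 < C)
    (hbound : ∀ f : H, ∀ ω ∈ Ω, |ι f ω| ≤ C * ‖f‖)
    (k : EuclideanSpace ℝ (Fin d) → H)
    (hk : ∀ ω ∈ Ω, ∀ f : H, (inner ℝ (k ω) f : ℝ) = ι f ω)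
    (A P : Matrix (Fin d) (Fin d) ℝ) (B B_N : EuclideanSpace ℝ (Fin d))
    (Γ : ℝ) (hΓ : 0 < Γ) (T : ℝ) (hT : 0 < T)
    (x : ℝ → EuclideanSpace ℝ (Fin d)) (hx : ContinuousOn x (Icc 0 T))
    (hxΩ : ∀ t ∈ Icc (0 : ℝ) T, x t ∈ Ω)
    (u : ℝ → ℝ) (hu : ContinuousOn u (Icc 0 T))
    (Hn : ℕ → Submodule ℝ H) [∀ m, FiniteDimensional ℝ (Hn m)]
    (hmono : Monotone Hn)
    (hdense : Dense (⋃ m, (Hn m : Set H)))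
    (xhat0 : EuclideanSpace ℝ (Fin d)) (fhat0 : H)
    (xhat : ℝ → EuclideanSpace ℝ (Fin d)) (fhat : ℝ → H)
    (hinit : xhat 0 = xhat0 ∧ fhat 0 = fhat0)
    (hsol : ∀ t ∈ Icc (0 : ℝ) T,
      HasDerivWithinAt xhat
        ((Matrix.toEuclideanLin A) (xhat t) + u t • B + (ι (fhat t) (x t)) • B_N)
        (Icc 0 T) t ∧
      HasDerivWithinAt fhat
        (Γ⁻¹ • ((inner ℝ B_N ((Matrix.toEuclideanLin P) (x t - xhat t)) : ℝ) • k (x t)))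
        (Icc 0 T) t)
    (xhatn : ℕ → ℝ → EuclideanSpace ℝ (Fin d)) (fhatn : ℕ → ℝ → H)
    (hinitn : ∀ m : ℕ, xhatn m 0 = xhat0 ∧
      fhatn m 0 = ((Hn m).orthogonalProjection fhat0 : H))
    (hmemn : ∀ m : ℕ, ∀ t ∈ Icc (0 : ℝ) T, fhatn m t ∈ Hn m)
    (hsoln : ∀ m : ℕ, ∀ t ∈ Icc (0 : ℝ) T,
      HasDerivWithinAt (xhatn m)
        ((Matrix.toEuclideanLin A) (xhatn m t) + u t • B + (ι (fhatn m t) (x t)) • B_N)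
        (Icc 0 T) t ∧
      HasDerivWithinAt (fhatn m)
        (((Hn m).orthogonalProjection
          (Γ⁻¹ • ((inner ℝ B_N ((Matrix.toEuclideanLin P) (x t - xhatn m t)) : ℝ) •
            k (x t))) : H))
        (Icc 0 T) t) :
    TendstoUniformlyOn (fun m t => xhatn m t) xhat atTop (Icc 0 T) ∧
    TendstoUniformlyOn (fun m t => fhatn m t) fhat atTop (Icc 0 T) := by
  classical
  -- bound on the kernel sections
  have hkC : ∀ ω ∈ Ω, ‖k ω‖ ≤ C := by
    intro ω hω
    have h1 : (inner ℝ (k ω) (k ω) : ℝ) = ι (k ω) ω := hk ω hω (k ω)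
    have h2 : ‖k ω‖ ^ 2 ≤ C * ‖k ω‖ := by
      rw [← real_inner_self_eq_norm_sq, h1]
      exact le_trans (le_abs_self _) (hbound (k ω) ω hω)
    nlinarith [norm_nonneg (k ω)]
  -- operator norms of the matrices
  set Acl : EuclideanSpace ℝ (Fin d) →L[ℝ] EuclideanSpace ℝ (Fin d) :=
    LinearMap.toContinuousLinearMap (Matrix.toEuclideanLin A) with hAcl
  set Pcl : EuclideanSpace ℝ (Fin d) →L[ℝ] EuclideanSpace ℝ (Fin d) :=
    LinearMap.toContinuousLinearMap (Matrix.toEuclideanLin P) with hPcl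
  have hAapp : ∀ v, Matrix.toEuclideanLin A v = Acl v := fun v => rfl
  have hPapp : ∀ v, Matrix.toEuclideanLin P v = Pcl v := fun v => rfl
  set MA := ‖Acl‖ with hMA
  set MP := ‖Pcl‖ with hMP
  set K0 : ℝ := MA + C * ‖B_N‖ + Γ⁻¹ * ‖B_N‖ * MP * C + 1 with hK0def
  have hMAnn : 0 ≤ MA := norm_nonneg _
  have hMPnn : 0 ≤ MP := norm_nonneg _
  have hK0 : 0 < K0 := by positivity
  set Cst : ℝ := Real.exp (K0 * T) / K0 with hCstdef
  have hCst : 0 < Cst := by positivity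
  -- continuity of all solutions
  have hcxhat : ContinuousOn xhat (Icc 0 T) := fun t ht => ((hsol t ht).1).continuousWithinAt
  have hcfhat : ContinuousOn fhat (Icc 0 T) := fun t ht => ((hsol t ht).2).continuousWithinAt
  have hcxhatn : ∀ m, ContinuousOn (xhatn m) (Icc 0 T) := fun m t ht =>
    ((hsoln m t ht).1).continuousWithinAt
  have hcfhatn : ∀ m, ContinuousOn (fhatn m) (Icc 0 T) := fun m t ht =>
    ((hsoln m t ht).2).continuousWithinAt
  -- the main Grönwall estimate
  have main : ∀ δ : ℝ, 0 < δ → ∀ m : ℕ,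
      (∀ t ∈ Icc (0 : ℝ) T, ‖fhat t - ((Hn m).orthogonalProjection (fhat t) : H)‖ ≤ δ) →
      ∀ t ∈ Icc (0 : ℝ) T,
        ‖xhat t - xhatn m t‖ ≤ C * ‖B_N‖ * Cst * δ ∧
        ‖fhat t - fhatn m t‖ ≤ C * ‖B_N‖ * Cst * δ + δ := by
    intro δ hδ m hδm
    set Q : H →L[ℝ] H := (Hn m).subtypeL.comp ((Hn m).orthogonalProjection) with hQdef
    have hQapp : ∀ w : H, Q w = ((Hn m).orthogonalProjection w : H) := fun w => rfl
    have hQnorm : ∀ w : H, ‖Q w‖ ≤ ‖w‖ := by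
      intro w
      rw [hQapp]
      calc ‖((Hn m).orthogonalProjection w : H)‖
          = ‖(Hn m).orthogonalProjection w‖ := rfl
        _ ≤ ‖(Hn m).orthogonalProjection‖ * ‖w‖ := ((Hn m).orthogonalProjection).le_opNorm w
        _ ≤ 1 * ‖w‖ :=
            mul_le_mul_of_nonneg_right (Submodule.orthogonalProjection_norm_le _) (norm_nonneg w)
        _ = ‖w‖ := one_mul _
    have hQid : ∀ w : H, w ∈ Hn m → Q w = w := fun w hw => by
      rw [hQapp]; exact (Submodule.starProjection_eq_self_iff).mpr hw
    have hQmem : ∀ w : H, Q w ∈ Hn m := fun w => by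
      rw [hQapp]; exact SetLike.coe_mem _
    have hQQ : ∀ w : H, Q (Q w) = Q w := fun w => hQid _ (hQmem w)
    -- error functions
    set F : ℝ → (EuclideanSpace ℝ (Fin d)) × H :=
      fun t => (xhat t - xhatn m t, Q (fhat t - fhatn m t)) with hFdef
    set dv : ℝ → (EuclideanSpace ℝ (Fin d)) × H := fun t =>
      (Matrix.toEuclideanLin A (xhat t - xhatn m t) + (ι (fhat t - fhatn m t) (x t)) • B_N,
       Q (Γ⁻¹ • ((inner ℝ B_N (Matrix.toEuclideanLin P (xhatn m t - xhat t)) : ℝ) • k (x t))))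
      with hdvdef
    -- derivative of F
    have hFderiv : ∀ t ∈ Icc (0 : ℝ) T, HasDerivWithinAt F (dv t) (Icc 0 T) t := by
      intro t ht
      have h1 := (hsol t ht).1.sub (hsoln m t ht).1
      have h1' : HasDerivWithinAt (fun s => xhat s - xhatn m s)
          (Matrix.toEuclideanLin A (xhat t - xhatn m t) +
            (ι (fhat t - fhatn m t) (x t)) • B_N) (Icc 0 T) t := by
        refine h1.congr_deriv ?_
        simp only [map_sub, Pi.sub_apply, sub_smul]
        abel
      have h2 := (hsol t ht).2.sub (hsoln m t ht).2
      have h2' : HasDerivWithinAt (fun s => Q (fhat s - fhatn m s))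
          (Q (Γ⁻¹ • ((inner ℝ B_N (Matrix.toEuclideanLin P (xhatn m t - xhat t)) : ℝ) •
            k (x t)))) (Icc 0 T) t := by
        have h3 := Q.hasFDerivAt.comp_hasDerivWithinAt t h2
        set g1 : H := Γ⁻¹ • ((inner ℝ B_N ((Matrix.toEuclideanLin P) (x t - xhat t)) : ℝ) •
          k (x t)) with hg1
        set g2 : H := Γ⁻¹ • ((inner ℝ B_N ((Matrix.toEuclideanLin P) (x t - xhatn m t)) : ℝ) •
          k (x t)) with hg2
        have hval : Q (g1 - ((Hn m).orthogonalProjection g2 : H)) =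
            Q (Γ⁻¹ • ((inner ℝ B_N (Matrix.toEuclideanLin P (xhatn m t - xhat t)) : ℝ) •
              k (x t))) := by
          have e1 : ((Hn m).orthogonalProjection g2 : H) = Q g2 := rfl
          rw [e1, map_sub Q g1 (Q g2), hQQ g2, ← map_sub Q g1 g2]
          congr 1
          rw [hg1, hg2, ← smul_sub, ← sub_smul, ← inner_sub_right,
            ← map_sub (Matrix.toEuclideanLin P)]
          have harg : (x t - xhat t) - (x t - xhatn m t) = xhatn m t - xhat t := by abel
          rw [harg]
        exact hval ▸ h3
      exact HasDerivWithinAt.prodMk h1' h2'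
    -- bound on the derivative
    have hdvbound : ∀ t ∈ Ico (0 : ℝ) T, ‖dv t‖ ≤ K0 * ‖F t‖ + C * ‖B_N‖ * δ := by
      intro t ht'
      have ht : t ∈ Icc (0 : ℝ) T := Ico_subset_Icc_self ht'
      have hxt : x t ∈ Ω := hxΩ t ht
      have hFnn : (0 : ℝ) ≤ ‖F t‖ := norm_nonneg _
      have hfst : ‖xhat t - xhatn m t‖ ≤ ‖F t‖ := norm_fst_le (F t)
      have hsnd : ‖Q (fhat t - fhatn m t)‖ ≤ ‖F t‖ := norm_snd_le (F t)
      have hrdec : fhat t - fhatn m t = Q (fhat t - fhatn m t) +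
          (fhat t - ((Hn m).orthogonalProjection (fhat t) : H)) := by
        rw [map_sub, hQid _ (hmemn m t ht), hQapp]
        abel
      have hrb : ‖fhat t - ((Hn m).orthogonalProjection (fhat t) : H)‖ ≤ δ := hδm t ht
      have hb1 : ‖(dv t).1‖ ≤ K0 * ‖F t‖ + C * ‖B_N‖ * δ := by
        have hA : ‖Matrix.toEuclideanLin A (xhat t - xhatn m t)‖ ≤
            MA * ‖xhat t - xhatn m t‖ := by rw [hAapp]; exact Acl.le_opNorm _
        have hι : |ι (fhat t - fhatn m t) (x t)| ≤
            C * ‖Q (fhat t - fhatn m t)‖ + C * δ := by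
          have e : ι (fhat t - fhatn m t) (x t) =
              ι (Q (fhat t - fhatn m t)) (x t) +
              ι (fhat t - ((Hn m).orthogonalProjection (fhat t) : H)) (x t) := by
            conv_lhs => rw [hrdec]
            rw [map_add, Pi.add_apply]
          rw [e]
          calc |ι (Q (fhat t - fhatn m t)) (x t) +
                ι (fhat t - ((Hn m).orthogonalProjection (fhat t) : H)) (x t)|
              ≤ |ι (Q (fhat t - fhatn m t)) (x t)| +
                |ι (fhat t - ((Hn m).orthogonalProjection (fhat t) : H)) (x t)| := abs_add_le _ _
            _ ≤ C * ‖Q (fhat t - fhatn m t)‖ +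
                C * ‖fhat t - ((Hn m).orthogonalProjection (fhat t) : H)‖ :=
                add_le_add (hbound _ _ hxt) (hbound _ _ hxt)
            _ ≤ C * ‖Q (fhat t - fhatn m t)‖ + C * δ := by
                have := mul_le_mul_of_nonneg_left hrb hC.le
                linarith
        calc ‖(dv t).1‖
            ≤ ‖Matrix.toEuclideanLin A (xhat t - xhatn m t)‖ +
              ‖(ι (fhat t - fhatn m t) (x t)) • B_N‖ := norm_add_le _ _
          _ = ‖Matrix.toEuclideanLin A (xhat t - xhatn m t)‖ +
              |ι (fhat t - fhatn m t) (x t)| * ‖B_N‖ := by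
              rw [norm_smul, Real.norm_eq_abs]
          _ ≤ MA * ‖xhat t - xhatn m t‖ +
              (C * ‖Q (fhat t - fhatn m t)‖ + C * δ) * ‖B_N‖ := by
              have := mul_le_mul_of_nonneg_right hι (norm_nonneg B_N)
              linarith
          _ ≤ K0 * ‖F t‖ + C * ‖B_N‖ * δ := by
              have h5 : MA * ‖xhat t - xhatn m t‖ ≤ MA * ‖F t‖ :=
                mul_le_mul_of_nonneg_left hfst hMAnn
              have h6' : C * ‖B_N‖ * ‖Q (fhat t - fhatn m t)‖ ≤ C * ‖B_N‖ * ‖F t‖ :=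
                mul_le_mul_of_nonneg_left hsnd (by positivity)
              have h7 : 0 ≤ Γ⁻¹ * ‖B_N‖ * MP * C := by positivity
              have h8 : (MA + C * ‖B_N‖) * ‖F t‖ ≤ K0 * ‖F t‖ :=
                mul_le_mul_of_nonneg_right (by rw [hK0def]; linarith) hFnn
              nlinarith [norm_nonneg B_N]
      have hb2 : ‖(dv t).2‖ ≤ K0 * ‖F t‖ + C * ‖B_N‖ * δ := by
        have hinner : |(inner ℝ B_N (Matrix.toEuclideanLin P (xhatn m t - xhat t)) : ℝ)| ≤
            ‖B_N‖ * (MP * ‖xhat t - xhatn m t‖) := by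
          calc |(inner ℝ B_N (Matrix.toEuclideanLin P (xhatn m t - xhat t)) : ℝ)|
              ≤ ‖B_N‖ * ‖Matrix.toEuclideanLin P (xhatn m t - xhat t)‖ :=
                abs_real_inner_le_norm _ _
            _ ≤ ‖B_N‖ * (MP * ‖xhatn m t - xhat t‖) := by
                rw [hPapp]
                exact mul_le_mul_of_nonneg_left (Pcl.le_opNorm _) (norm_nonneg B_N)
            _ = ‖B_N‖ * (MP * ‖xhat t - xhatn m t‖) := by rw [norm_sub_rev]
        calc ‖(dv t).2‖
            ≤ ‖Γ⁻¹ • ((inner ℝ B_N (Matrix.toEuclideanLin P (xhatn m t - xhat t)) : ℝ) •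
              k (x t))‖ := hQnorm _
          _ = |Γ⁻¹| * (|(inner ℝ B_N (Matrix.toEuclideanLin P (xhatn m t - xhat t)) : ℝ)| *
              ‖k (x t)‖) := by rw [norm_smul, norm_smul, Real.norm_eq_abs, Real.norm_eq_abs]
          _ ≤ Γ⁻¹ * ((‖B_N‖ * (MP * ‖xhat t - xhatn m t‖)) * C) := by
              rw [abs_of_pos (inv_pos.mpr hΓ)]
              have h10 : (0:ℝ) ≤ ‖B_N‖ * (MP * ‖xhat t - xhatn m t‖) :=
                mul_nonneg (norm_nonneg _) (mul_nonneg hMPnn (norm_nonneg _))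
              exact mul_le_mul_of_nonneg_left
                (mul_le_mul hinner (hkC (x t) hxt) (norm_nonneg _) h10)
                (inv_pos.mpr hΓ).le
          _ ≤ K0 * ‖F t‖ + C * ‖B_N‖ * δ := by
              have h13 : Γ⁻¹ * ((‖B_N‖ * (MP * ‖xhat t - xhatn m t‖)) * C) =
                  (Γ⁻¹ * ‖B_N‖ * MP * C) * ‖xhat t - xhatn m t‖ := by ring
              rw [h13]
              have h14 : 0 ≤ Γ⁻¹ * ‖B_N‖ * MP * C := by positivity
              have h15 : (Γ⁻¹ * ‖B_N‖ * MP * C) * ‖xhat t - xhatn m t‖ ≤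
                  (Γ⁻¹ * ‖B_N‖ * MP * C) * ‖F t‖ := mul_le_mul_of_nonneg_left hfst h14
              have h16 : (0:ℝ) ≤ C * ‖B_N‖ * δ := by positivity
              have h17 : 0 ≤ MA + C * ‖B_N‖ + 1 := by positivity
              have h18 : (Γ⁻¹ * ‖B_N‖ * MP * C) * ‖F t‖ ≤ K0 * ‖F t‖ :=
                mul_le_mul_of_nonneg_right (by rw [hK0def]; linarith) hFnn
              linarith
      rw [Prod.norm_def]
      exact max_le hb1 hb2
    -- initial condition
    have hF0 : ‖F 0‖ ≤ 0 := by
      have e1 : xhat 0 - xhatn m 0 = 0 := by rw [hinit.1, (hinitn m).1, sub_self]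
      have e2 : Q (fhat 0 - fhatn m 0) = 0 := by
        rw [hinit.2, (hinitn m).2, map_sub, ← hQapp, hQQ, sub_self]
      have : F 0 = (0, 0) := by rw [hFdef]; simp only [e1, e2]
      rw [this]
      simp [Prod.norm_def]
    -- continuity of F
    have hcF : ContinuousOn F (Icc 0 T) :=
      (hcxhat.sub (hcxhatn m)).prodMk
        (Q.continuous.comp_continuousOn (hcfhat.sub (hcfhatn m)))
    -- Grönwall
    have hgron := norm_le_gronwallBound_of_norm_deriv_right_le hcF
      (fun t ht => (hFderiv t (Ico_subset_Icc_self ht)).mono_of_mem_nhdsWithin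
        (Icc_mem_nhdsGE_of_mem ht)) hF0 hdvbound
    have hgb : ∀ t ∈ Icc (0 : ℝ) T,
        gronwallBound 0 K0 (C * ‖B_N‖ * δ) (t - 0) ≤ C * ‖B_N‖ * Cst * δ := by
      intro t ht
      rw [gronwallBound_of_K_ne_0 hK0.ne']
      have h1 : Real.exp (K0 * (t - 0)) - 1 ≤ Real.exp (K0 * T) := by
        have h2 : K0 * (t - 0) ≤ K0 * T := by
          have := ht.2
          nlinarith
        have := Real.exp_le_exp.mpr h2
        linarith
      have h3 : (0:ℝ) ≤ C * ‖B_N‖ * δ / K0 := by positivity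
      calc 0 * Real.exp (K0 * (t - 0)) +
            C * ‖B_N‖ * δ / K0 * (Real.exp (K0 * (t - 0)) - 1)
          = C * ‖B_N‖ * δ / K0 * (Real.exp (K0 * (t - 0)) - 1) := by ring
        _ ≤ C * ‖B_N‖ * δ / K0 * Real.exp (K0 * T) := mul_le_mul_of_nonneg_left h1 h3
        _ = C * ‖B_N‖ * Cst * δ := by rw [hCstdef]; field_simp
    intro t ht
    have hFt : ‖F t‖ ≤ C * ‖B_N‖ * Cst * δ := le_trans (hgron t ht) (hgb t ht)
    constructor
    · exact le_trans (norm_fst_le (F t)) hFt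
    · have hrdec : fhat t - fhatn m t = Q (fhat t - fhatn m t) +
          (fhat t - ((Hn m).orthogonalProjection (fhat t) : H)) := by
        rw [map_sub, hQid _ (hmemn m t ht), hQapp]
        abel
      calc ‖fhat t - fhatn m t‖
          ≤ ‖Q (fhat t - fhatn m t)‖ +
            ‖fhat t - ((Hn m).orthogonalProjection (fhat t) : H)‖ := by
            conv_lhs => rw [hrdec]
            exact norm_add_le _ _
        _ ≤ ‖F t‖ + δ := add_le_add (norm_snd_le (F t)) (hδm t ht)
        _ ≤ C * ‖B_N‖ * Cst * δ + δ := by linarith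
  -- assemble the uniform convergence statement
  have keyconv : ∀ ε : ℝ, 0 < ε → ∀ᶠ m in atTop, ∀ t ∈ Icc (0 : ℝ) T,
      ‖xhat t - xhatn m t‖ < ε ∧ ‖fhat t - fhatn m t‖ < ε := by
    intro ε hε
    set D : ℝ := C * ‖B_N‖ * Cst + 1 with hDdef
    have hD : 0 < D := by positivity
    set δ : ℝ := ε / (2 * D) with hδdef
    have hδ : 0 < δ := by positivity
    have hKcpt : IsCompact (fhat '' Icc 0 T) := isCompact_Icc.image_of_continuousOn hcfhat
    obtain ⟨N, hN⟩ := proj_unif_aux Hn hmono hdense hKcpt hδ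
    rw [eventually_atTop]
    refine ⟨N, fun m hm t ht => ?_⟩
    have hproj : ∀ s ∈ Icc (0 : ℝ) T,
        ‖fhat s - ((Hn m).orthogonalProjection (fhat s) : H)‖ ≤ δ := fun s hs =>
      (hN m hm (fhat s) (Set.mem_image_of_mem fhat hs)).le
    have hmain := main δ hδ m hproj t ht
    have hb : C * ‖B_N‖ * Cst * δ + δ ≤ ε / 2 := by
      have h1 : C * ‖B_N‖ * Cst * δ + δ = D * δ := by rw [hDdef]; ring
      have h2 : D * δ = ε / 2 := by
        rw [hδdef]
        field_simp
      rw [h1, h2]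
    have hbx : C * ‖B_N‖ * Cst * δ ≤ ε / 2 := by
      have := hδ
      linarith [hb]
    exact ⟨lt_of_le_of_lt (le_trans hmain.1 hbx) (by linarith),
      lt_of_le_of_lt (le_trans hmain.2 hb) (by linarith)⟩
  constructor
  · rw [Metric.tendstoUniformlyOn_iff]
    intro ε hε
    filter_upwards [keyconv ε hε] with m hm t ht
    rw [dist_eq_norm]
    exact (hm t ht).1
  · rw [Metric.tendstoUniformlyOn_iff]
    intro ε hε
    filter_upwards [keyconv ε hε] with m hm t ht
    rw [dist_eq_norm]
    exact (hm t ht).2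
end

section
/- For every σ > 0, every positive integer n and all pairwise distinct points x₁,…,xₙ ∈ ℝ^d, the n×n real matrix 𝕂 with entries 𝕂_{ij} = exp(−‖x_i − x_j‖²/(2σ²)) is symmetric and positive definite. -/
open MeasureTheory Real

noncomputable section

namespace GaussGramAux

variable {d n : ℕ}

lemma integrable_gauss {b : ℝ} (hb : 0 < b) :
    Integrable (fun v : EuclideanSpace ℝ (Fin d) => rexp (-b * ‖v‖ ^ 2)) := by
  have h := (GaussianFourier.integrable_cexp_neg_mul_sq_norm_add
    (V := EuclideanSpace ℝ (Fin d)) (b := (b : ℂ)) (by simpa using hb) 0 0).norm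
  refine h.congr (Filter.Eventually.of_forall fun v => ?_)
  simp only [Complex.norm_exp]
  norm_num
  left
  norm_cast

lemma integral_gauss_pos {b : ℝ} (hb : 0 < b) :
    0 < ∫ v : EuclideanSpace ℝ (Fin d), rexp (-b * ‖v‖ ^ 2) := by
  rw [GaussianFourier.integral_rexp_neg_mul_sq_norm hb]
  positivity

lemma norm_id (x y u : EuclideanSpace ℝ (Fin d)) :
    ‖u - x‖ ^ 2 + ‖u - y‖ ^ 2
      = 2 * ‖u - (2:ℝ)⁻¹ • (x + y)‖ ^ 2 + ‖x - y‖ ^ 2 / 2 := by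
  have par := parallelogram_law_with_norm ℝ (u - x) (u - y)
  have h1 : (u - x) + (u - y) = (2:ℝ) • (u - (2:ℝ)⁻¹ • (x + y)) := by module
  have h2 : (u - x) - (u - y) = y - x := by abel
  rw [h1, h2, norm_smul, norm_sub_rev y x] at par
  simp only [Real.norm_ofNat] at par
  nlinarith [norm_nonneg (u - (2:ℝ)⁻¹ • (x + y))]

lemma gauss_prod {a : ℝ} (x y u : EuclideanSpace ℝ (Fin d)) :
    rexp (-a * ‖u - x‖ ^ 2) * rexp (-a * ‖u - y‖ ^ 2)
      = rexp (-a * ‖x - y‖ ^ 2 / 2) * rexp (-(2 * a) * ‖u - (2:ℝ)⁻¹ • (x + y)‖ ^ 2) := by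
  rw [← Real.exp_add, ← Real.exp_add]
  congr 1
  linear_combination (-a) * norm_id x y u

lemma gauss_prod_integrable {a : ℝ} (ha : 0 < a) (x y : EuclideanSpace ℝ (Fin d)) :
    Integrable (fun u : EuclideanSpace ℝ (Fin d) =>
      rexp (-a * ‖u - x‖ ^ 2) * rexp (-a * ‖u - y‖ ^ 2)) := by
  simp only [gauss_prod x y]
  exact ((integrable_gauss (by linarith : (0:ℝ) < 2 * a)).comp_sub_right
    ((2:ℝ)⁻¹ • (x + y))).const_mul _

lemma gauss_prod_integral {a : ℝ} (x y : EuclideanSpace ℝ (Fin d)) :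
    ∫ u : EuclideanSpace ℝ (Fin d), rexp (-a * ‖u - x‖ ^ 2) * rexp (-a * ‖u - y‖ ^ 2)
      = rexp (-a * ‖x - y‖ ^ 2 / 2)
        * ∫ v : EuclideanSpace ℝ (Fin d), rexp (-(2 * a) * ‖v‖ ^ 2) := by
  simp only [gauss_prod x y]
  rw [MeasureTheory.integral_const_mul]
  congr 1
  exact integral_sub_right_eq_self (fun v => rexp (-(2 * a) * ‖v‖ ^ 2)) _

lemma exists_inner_inj (xc : Fin n → EuclideanSpace ℝ (Fin d))
    (hxc : Function.Injective xc) :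
    ∃ v : EuclideanSpace ℝ (Fin d),
      Function.Injective fun i => (inner ℝ v (xc i) : ℝ) := by
  set U : Set (EuclideanSpace ℝ (Fin d)) :=
    ⋃ (i : Fin n) (j : Fin n) (_ : i ≠ j), {v | (inner ℝ v (xc i - xc j) : ℝ) = 0} with hU
  have hUm : volume U = 0 := by
    refine measure_iUnion_null fun i => measure_iUnion_null fun j =>
      measure_iUnion_null fun hij => ?_
    have hw : xc i - xc j ≠ 0 := sub_ne_zero.2 fun h => hij (hxc h)
    have : {v : EuclideanSpace ℝ (Fin d) | (inner ℝ v (xc i - xc j) : ℝ) = 0}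
        = (LinearMap.ker (innerSL ℝ (xc i - xc j) : EuclideanSpace ℝ (Fin d) →ₗ[ℝ] ℝ) : Set (EuclideanSpace ℝ (Fin d))) := by
      ext v
      simp only [Set.mem_setOf_eq, SetLike.mem_coe, LinearMap.mem_ker,
        ContinuousLinearMap.coe_coe, innerSL_apply_apply]
      rw [real_inner_comm]
    rw [this]
    refine Measure.addHaar_submodule _ _ fun htop => ?_
    have : (innerSL ℝ (xc i - xc j)) (xc i - xc j) = 0 := by
      have := htop ▸ Submodule.mem_top (x := xc i - xc j)
      simpa [LinearMap.mem_ker] using this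
    simp only [innerSL_apply_apply, real_inner_self_eq_norm_sq] at this
    apply hw
    have h0 : ‖xc i - xc j‖ = 0 := by nlinarith [norm_nonneg (xc i - xc j)]
    exact norm_eq_zero.mp h0
  have hne : U ≠ Set.univ := by
    intro h
    have : volume (Set.univ : Set (EuclideanSpace ℝ (Fin d))) ≠ 0 :=
      (isOpen_univ.measure_pos volume ⟨0, trivial⟩).ne'
    exact this (h ▸ hUm)
  obtain ⟨v, hv⟩ := Set.ne_univ_iff_exists_notMem U |>.mp hne
  refine ⟨v, fun i j hij => ?_⟩
  by_contra hne'
  apply hv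
  refine Set.mem_iUnion.2 ⟨i, Set.mem_iUnion.2 ⟨j, Set.mem_iUnion.2 ⟨hne', ?_⟩⟩⟩
  simp only [Set.mem_setOf_eq, inner_sub_right]
  simpa [sub_eq_zero] using hij

/-- linear independence of Gaussian bumps -/
lemma gauss_indep {a : ℝ} (ha : 0 < a) (xc : Fin n → EuclideanSpace ℝ (Fin d))
    (hxc : Function.Injective xc) (c : Fin n → ℝ)
    (hc : ∀ u : EuclideanSpace ℝ (Fin d),
      ∑ i, c i * rexp (-a * ‖u - xc i‖ ^ 2) = 0) : c = 0 := by
  obtain ⟨v, hv⟩ := exists_inner_inj xc hxc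
  set b : Fin n → ℝ := fun i => c i * rexp (-a * ‖xc i‖ ^ 2) with hb
  set r : Fin n → ℝ := fun i => rexp (2 * a * (inner ℝ v (xc i) : ℝ)) with hr
  have hrinj : Function.Injective r := by
    intro i j hij
    apply hv
    have h2 : 2 * a * (inner ℝ v (xc i) : ℝ) = 2 * a * (inner ℝ v (xc j) : ℝ) :=
      Real.exp_injective hij
    exact mul_left_cancel₀ (by positivity) h2
  have hG : ∀ u : EuclideanSpace ℝ (Fin d),
      ∑ i, b i * rexp (2 * a * (inner ℝ u (xc i) : ℝ)) = 0 := by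
    intro u
    have h0 := hc u
    have : ∑ i, c i * rexp (-a * ‖u - xc i‖ ^ 2)
        = rexp (-a * ‖u‖ ^ 2) * ∑ i, b i * rexp (2 * a * (inner ℝ u (xc i) : ℝ)) := by
      rw [Finset.mul_sum]
      refine Finset.sum_congr rfl fun i _ => ?_
      have harg : -a * ‖u - xc i‖ ^ 2
          = (-a * ‖u‖ ^ 2) + ((-a * ‖xc i‖ ^ 2) + 2 * a * (inner ℝ u (xc i) : ℝ)) := by
        rw [norm_sub_sq_real]; ring
      rw [hb, harg, Real.exp_add, Real.exp_add]
      ring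
    rw [this] at h0
    rcases mul_eq_zero.mp h0 with h | h
    · exact absurd h (Real.exp_ne_zero _)
    · exact h
  have hkey : ∀ k : Fin n, ∑ i, b i * r i ^ (k : ℕ) = 0 := by
    intro k
    have := hG (((k : ℕ) : ℝ) • v)
    simp only [real_inner_smul_left] at this
    convert this using 2 with i
    rw [hr, ← Real.exp_nat_mul]
    ring_nf
  have hb0 : b = 0 := Matrix.eq_zero_of_forall_pow_sum_mul_pow_eq_zero hrinj hkey
  funext i
  have : b i = 0 := congrFun hb0 i
  rw [hb] at this
  rcases mul_eq_zero.mp this with h | h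
  · exact h
  · exact absurd h (Real.exp_ne_zero _)

end GaussGramAux

end

/-- For every `σ > 0`, every positive `n` and pairwise distinct points
`x₁,…,xₙ ∈ ℝ^d`, the Gram matrix of the Gaussian kernel
`K(p,q) = exp(−‖p−q‖²/(2σ²))` is symmetric and positive definite. -/
theorem gaussian_gram_symm_posDef
    {d : ℕ} (σ : ℝ) (hσ : 0 < σ) (n : ℕ) (hn : 0 < n)
    (xc : Fin n → EuclideanSpace ℝ (Fin d)) (hxc : Function.Injective xc) :
    (Matrix.of fun i j : Fin n =>
        Real.exp (-‖xc i - xc j‖ ^ 2 / (2 * σ ^ 2))).IsSymm ∧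
    (Matrix.of fun i j : Fin n =>
        Real.exp (-‖xc i - xc j‖ ^ 2 / (2 * σ ^ 2))).PosDef := by
  open GaussGramAux in
  have hsymm : (Matrix.of fun i j : Fin n =>
      Real.exp (-‖xc i - xc j‖ ^ 2 / (2 * σ ^ 2))).IsSymm := by
    apply Matrix.IsSymm.ext
    intro i j
    simp only [Matrix.of_apply, norm_sub_rev]
  refine ⟨hsymm, Matrix.posDef_iff_dotProduct_mulVec.mpr ⟨?_, ?_⟩⟩
  · -- Hermitian
    rw [Matrix.IsHermitian, Matrix.conjTranspose]
    ext i j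
    simp [norm_sub_rev]
  · intro c hc
    set a : ℝ := (σ ^ 2)⁻¹ with haa
    have ha : 0 < a := by positivity
    set C : ℝ := ∫ v : EuclideanSpace ℝ (Fin d), rexp (-(2 * a) * ‖v‖ ^ 2) with hC
    have hCpos : 0 < C := integral_gauss_pos (by positivity)
    -- kernel entry rewrite
    have hker : ∀ i j : Fin n, Real.exp (-‖xc i - xc j‖ ^ 2 / (2 * σ ^ 2))
        = rexp (-a * ‖xc i - xc j‖ ^ 2 / 2) := by
      intro i j
      congr 1
      rw [haa]
      field_simp
    -- F and its square integral
    set F : EuclideanSpace ℝ (Fin d) → ℝ :=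
      fun u => ∑ i, c i * rexp (-a * ‖u - xc i‖ ^ 2) with hF
    have hFne : ∃ u, F u ≠ 0 := by
      by_contra h
      push_neg at h
      exact hc (gauss_indep ha xc hxc c h)
    have hterm : ∀ i j : Fin n, Integrable (fun u : EuclideanSpace ℝ (Fin d) =>
        (c i * rexp (-a * ‖u - xc i‖ ^ 2)) * (c j * rexp (-a * ‖u - xc j‖ ^ 2))) := by
      intro i j
      have := (gauss_prod_integrable ha (xc i) (xc j)).const_mul (c i * c j)
      refine this.congr (Filter.Eventually.of_forall fun u => ?_)
      ring
    have hsq : ∀ u, F u ^ 2 = ∑ i, ∑ j,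
        (c i * rexp (-a * ‖u - xc i‖ ^ 2)) * (c j * rexp (-a * ‖u - xc j‖ ^ 2)) := by
      intro u
      rw [hF, sq, Finset.sum_mul_sum]
    have hF2int : Integrable (fun u => F u ^ 2) := by
      simp only [hsq]
      exact integrable_finset_sum _ fun i _ => integrable_finset_sum _ fun j _ => hterm i j
    have hint : ∫ u, F u ^ 2 = ∑ i, ∑ j, c i * c j * rexp (-a * ‖xc i - xc j‖ ^ 2 / 2) * C := by
      simp only [hsq]
      rw [integral_finset_sum _ fun i _ => integrable_finset_sum _ fun j _ => hterm i j]
      refine Finset.sum_congr rfl fun i _ => ?_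
      rw [integral_finset_sum _ fun j _ => hterm i j]
      refine Finset.sum_congr rfl fun j _ => ?_
      have : (fun u : EuclideanSpace ℝ (Fin d) =>
          (c i * rexp (-a * ‖u - xc i‖ ^ 2)) * (c j * rexp (-a * ‖u - xc j‖ ^ 2)))
          = fun u => (c i * c j) * (rexp (-a * ‖u - xc i‖ ^ 2) * rexp (-a * ‖u - xc j‖ ^ 2)) := by
        funext u; ring
      rw [this, MeasureTheory.integral_const_mul, gauss_prod_integral, hC]
      ring
    have hFcont : Continuous F := by
      apply continuous_finset_sum
      intro i _
      exact continuous_const.mul (Real.continuous_exp.comp (continuous_const.mul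
        ((continuous_id.sub continuous_const).norm.pow 2)))
    have hpos : 0 < ∫ u, F u ^ 2 := by
      rcases (integral_nonneg (f := fun u => F u ^ 2) fun u => sq_nonneg (F u)).lt_or_eq with h | h
      · exact h
      · exfalso
        have h0 : (fun u => F u ^ 2) =ᵐ[volume] 0 :=
          (integral_eq_zero_iff_of_nonneg (fun u => sq_nonneg (F u)) hF2int).mp h.symm
        have : F = 0 := by
          have hcont : Continuous fun u => F u ^ 2 := hFcont.pow 2
          have := hcont.ae_eq_iff_eq volume continuous_zero |>.mp h0
          funext u
          have hu := congrFun this u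
          simpa using pow_eq_zero_iff (n := 2) (by norm_num) |>.mp hu
        obtain ⟨u, hu⟩ := hFne
        exact hu (by rw [this]; rfl)
    -- final computation
    have hquad : dotProduct (star c) ((Matrix.of fun i j : Fin n =>
        Real.exp (-‖xc i - xc j‖ ^ 2 / (2 * σ ^ 2))).mulVec c)
        = (∫ u, F u ^ 2) / C := by
      rw [hint]
      rw [eq_div_iff hCpos.ne']
      simp only [dotProduct, Matrix.mulVec, Matrix.of_apply, Pi.star_apply, star_trivial]
      rw [Finset.sum_mul]
      refine Finset.sum_congr rfl fun i _ => ?_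
      rw [Finset.mul_sum, Finset.sum_mul]
      refine Finset.sum_congr rfl fun j _ => ?_
      rw [hker i j]
      ring
    rw [hquad]
    positivity
end

section
/- Let T > 0, let x : [0,T] → Ω and x̃ : [0,T] → ℝ^d be continuous, and let α : [0,T] → ℝⁿ be a differentiable curve; set f̂ₙ(t) = Σ_{j=1}^{n} α_j(t) k_{x_j} ∈ Hₙ. Then f̂ₙ satisfies the projected learning law f̂ₙ'(t) = Πₙ Γ⁻¹ (B_N E_{x(t)})* P x̃(t) for all t ∈ [0,T] if and only if α satisfies the ordinary differential equation α'(t) = 𝕂⁻¹ Γ⁻¹ 𝒦(x_c, x(t)) (B_Nᵀ P x̃(t)), where 𝒦(x_c, x(t)) ∈ ℝⁿ is the vector with components k_{x_i}(x(t)), i = 1,…,n. -/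
open Set

/-- The orthogonal projection of `H` onto the finite-dimensional subspace
`Hₙ = span{k_{x₁},…,k_{xₙ}}` spanned by the representers of the kernel centers. -/
noncomputable def projHn {d n : ℕ} {H : Type} [NormedAddCommGroup H]
    [InnerProductSpace ℝ H]
    (k : EuclideanSpace ℝ (Fin d) → H) (xc : Fin n → EuclideanSpace ℝ (Fin d)) :
    H →L[ℝ] (Submodule.span ℝ (Set.range fun i => k (xc i))) :=
  haveI : FiniteDimensional ℝ (Submodule.span ℝ (Set.range fun i => k (xc i))) :=
    FiniteDimensional.span_of_finite ℝ (Set.finite_range _)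
  Submodule.orthogonalProjection _

/-- with `f̂ₙ(t) = Σⱼ αⱼ(t) k_{xⱼ}`, the projected learning law
`f̂ₙ'(t) = Πₙ Γ⁻¹ (B_N E_{x(t)})* P x̃(t)` holds on `[0,T]` if and only if the
coefficient vector satisfies the ODE `α'(t) = 𝕂⁻¹ Γ⁻¹ 𝒦(x_c,x(t)) (B_Nᵀ P x̃(t))`. -/
theorem learning_law_iff_coefficient_ode
    {d n : ℕ} (Ω : Set (EuclideanSpace ℝ (Fin d)))
    {H : Type} [NormedAddCommGroup H] [InnerProductSpace ℝ H] [CompleteSpace H]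
    (ι : H →ₗ[ℝ] (EuclideanSpace ℝ (Fin d) → ℝ))
    (C : ℝ) (hC : 0 < C)
    (hbound : ∀ f : H, ∀ ω ∈ Ω, |ι f ω| ≤ C * ‖f‖)
    (k : EuclideanSpace ℝ (Fin d) → H)
    (hk : ∀ ω ∈ Ω, ∀ f : H, (inner ℝ (k ω) f : ℝ) = ι f ω)
    (B_N : EuclideanSpace ℝ (Fin d)) (P : Matrix (Fin d) (Fin d) ℝ)
    (Γ : ℝ) (hΓ : 0 < Γ)
    (xc : Fin n → EuclideanSpace ℝ (Fin d)) (hxcΩ : ∀ i, xc i ∈ Ω)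
    (hGram : IsUnit (Matrix.of fun i j : Fin n =>
      (inner ℝ (k (xc i)) (k (xc j)) : ℝ)).det)
    (T : ℝ) (hT : 0 < T)
    (x : ℝ → EuclideanSpace ℝ (Fin d)) (hx : ContinuousOn x (Icc 0 T))
    (hxΩ : ∀ t ∈ Icc (0 : ℝ) T, x t ∈ Ω)
    (xerr : ℝ → EuclideanSpace ℝ (Fin d)) (hxerr : ContinuousOn xerr (Icc 0 T))
    (α : ℝ → (Fin n → ℝ))
    (hα : ∀ t ∈ Icc (0 : ℝ) T, DifferentiableWithinAt ℝ α (Icc 0 T) t) :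
    (∀ t ∈ Icc (0 : ℝ) T,
      HasDerivWithinAt (fun s => ∑ j, α s j • k (xc j))
        ((projHn k xc
          (Γ⁻¹ • ((inner ℝ B_N ((Matrix.toEuclideanLin P) (xerr t)) : ℝ) • k (x t))) : H))
        (Icc 0 T) t) ↔
    (∀ t ∈ Icc (0 : ℝ) T,
      HasDerivWithinAt α
        ((Matrix.of fun i j : Fin n => (inner ℝ (k (xc i)) (k (xc j)) : ℝ))⁻¹.mulVec
          (fun i => Γ⁻¹ * (ι (k (xc i)) (x t)) *
            (inner ℝ B_N ((Matrix.toEuclideanLin P) (xerr t)) : ℝ)))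
        (Icc 0 T) t) := by
  classical
  set 𝕂 : Matrix (Fin n) (Fin n) ℝ :=
    Matrix.of fun i j : Fin n => (inner ℝ (k (xc i)) (k (xc j)) : ℝ) with h𝕂
  set s : ℝ → ℝ := fun t => (inner ℝ B_N ((Matrix.toEuclideanLin P) (xerr t)) : ℝ) with hs
  set β : ℝ → (Fin n → ℝ) := fun t =>
    𝕂⁻¹.mulVec (fun i => Γ⁻¹ * (ι (k (xc i)) (x t)) * s t) with hβ
  -- the synthesis map
  set Llin : (Fin n → ℝ) →ₗ[ℝ] H :=
    { toFun := fun c => ∑ j, c j • k (xc j)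
      map_add' := by intro a b; simp [add_smul, Finset.sum_add_distrib]
      map_smul' := by intro m a; simp [smul_smul, Finset.smul_sum]
      } with hLlin
  set L : (Fin n → ℝ) →L[ℝ] H := Llin.toContinuousLinearMap with hL
  have hLapp : ∀ c : Fin n → ℝ, L c = ∑ j, c j • k (xc j) := fun c => rfl
  -- inner product of k (xc i) with L c
  have hinnerL : ∀ (c : Fin n → ℝ) (i : Fin n),
      (inner ℝ (k (xc i)) (L c) : ℝ) = 𝕂.mulVec c i := by
    intro c i
    rw [hLapp]
    rw [inner_sum]
    simp only [real_inner_smul_right]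
    simp [Matrix.mulVec, dotProduct, h𝕂, mul_comm]
  -- injectivity of L
  have hLinj : Function.Injective L := by
    intro a b hab
    have h0 : L (a - b) = 0 := by rw [map_sub, hab, sub_self]
    have h𝕂0 : 𝕂.mulVec (a - b) = 0 := by
      funext i
      rw [← hinnerL (a - b) i, h0]
      simp
    have hab0 : a - b = 0 := by
      have := congrArg 𝕂⁻¹.mulVec h𝕂0
      simpa [Matrix.mulVec_mulVec, Matrix.nonsing_inv_mul 𝕂 hGram] using this
    exact sub_eq_zero.mp hab0
  -- key computation: the projection equals L (β t)
  have hproj : ∀ t ∈ Icc (0 : ℝ) T,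
      ((projHn k xc (Γ⁻¹ • (s t • k (x t)))) : H) = L (β t) := by
    intro t ht
    haveI : FiniteDimensional ℝ
        (Submodule.span ℝ (Set.range fun i => k (xc i))) :=
      FiniteDimensional.span_of_finite ℝ (Set.finite_range _)
    apply Submodule.eq_starProjection_of_mem_of_inner_eq_zero
    · rw [hLapp]
      exact Submodule.sum_mem _ fun j _ =>
        Submodule.smul_mem _ _ (Submodule.subset_span ⟨j, rfl⟩)
    · intro w hw
      -- enough to check on generators
      have hgen : ∀ i : Fin n,
          (inner ℝ (Γ⁻¹ • (s t • k (x t)) - L (β t)) (k (xc i)) : ℝ) = 0 := by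
        intro i
        rw [inner_sub_left, show (inner ℝ (L (β t)) (k (xc i)) : ℝ) = inner ℝ (k (xc i)) (L (β t)) from real_inner_comm _ _, hinnerL]
        have hmv : 𝕂.mulVec (β t) =
            fun i => Γ⁻¹ * (ι (k (xc i)) (x t)) * s t := by
          rw [hβ, Matrix.mulVec_mulVec, Matrix.mul_nonsing_inv 𝕂 hGram,
            Matrix.one_mulVec]
        have hval : (inner ℝ (Γ⁻¹ • (s t • k (x t))) (k (xc i)) : ℝ) =
            Γ⁻¹ * (ι (k (xc i)) (x t)) * s t := by
          rw [real_inner_smul_left, real_inner_smul_left,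
            hk (x t) (hxΩ t ht) (k (xc i))]
          ring
        rw [hval, hmv]
        ring
      induction hw using Submodule.span_induction with
      | mem w hw =>
          obtain ⟨i, rfl⟩ := hw
          exact hgen i
      | zero => simp
      | add w₁ w₂ _ _ h1 h2 => rw [inner_add_right, h1, h2, add_zero]
      | smul c w _ h => rw [real_inner_smul_right, h, mul_zero]
  -- derivative transfer
  have hcomp : ∀ t ∈ Icc (0 : ℝ) T, ∀ c : Fin n → ℝ,
      HasDerivWithinAt α c (Icc 0 T) t →
      HasDerivWithinAt (fun u => ∑ j, α u j • k (xc j)) (L c) (Icc 0 T) t := by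
    intro t ht c hc
    have := (L.hasFDerivAt (x := α t)).comp_hasDerivWithinAt t hc
    simpa [hLapp, Function.comp_def] using this
  have hUD : UniqueDiffOn ℝ (Icc (0 : ℝ) T) := uniqueDiffOn_Icc hT
  constructor
  · intro h t ht
    obtain ⟨c, hc⟩ := hα t ht
    have hc' : HasDerivWithinAt α (c 1) (Icc 0 T) t := by
      exact hc.hasDerivWithinAt
    have h1 := hcomp t ht _ hc'
    have h2 := h t ht
    rw [hproj t ht] at h2
    have heq : L (c 1) = L (β t) := by
      rw [← h1.derivWithin (hUD t ht), ← h2.derivWithin (hUD t ht)]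
    rw [hLinj heq] at hc'
    exact hc'
  · intro h t ht
    rw [hproj t ht]
    exact hcomp t ht _ (h t ht)
end
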